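/- Let V be an F_2-subspace of F_{2^n} of dimension k such that K_n(a) = 0 for all a ∈ V. Assuming the identity Σ_{a∈V}(K_n(a)^2 - K_n(a)) = 2^{n+k} - 2^{n+1} + 2^k Σ_{u∈V^⊥} K_n(u^{-1}) and the Weil bound |K_n(a)| ≤ 2^{n/2+1}, it follows that k ≤ n/2 + 1 for n ≥ 3. -/

import Mathlib

noncomputable section

abbrev K (n : ℕ) := GaloisField 2 n

noncomputable instance (n : ℕ) : Fintype (K n) := Fintype.ofFinite _

/-- The absolute trace of `F_{2^n}` to `F_2`. -/
def tr (n : ℕ) : K n →ₗ[ZMod 2] ZMod 2 := Algebra.trace (ZMod 2) (K n)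

/-- The additive character `x ↦ (-1)^{Tr(x)}`. -/
def chi (n : ℕ) (x : K n) : ℤ := (-1) ^ (tr n x).val

/-- The Kloosterman sum. -/
def Kl (n : ℕ) (a : K n) : ℤ := ∑ x : K n, chi n (x⁻¹ + a * x)

/-- The quadratic form `Q(x) = ∑_{0 ≤ i < j < n} x^{2^i + 2^j}`. -/
def Qf (n : ℕ) (x : K n) : K n := ∑ i ∈ Finset.range n, ∑ j ∈ Finset.Ioo i n, x ^ (2^i + 2^j)

noncomputable instance {n : ℕ} (V : Submodule (ZMod 2) (K n)) : Fintype V :=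
  Fintype.ofFinite _

set_option maxHeartbeats 1000000 in
theorem stmt18 {n k : ℕ} (hn : 3 ≤ n)
    (V P : Submodule (ZMod 2) (K n))
    (hk : Module.finrank (ZMod 2) V = k)
    (hzero : ∀ a ∈ V, Kl n a = 0)
    (hP : (P : Set (K n)) = {x : K n | ∀ v ∈ V, tr n (v * x) = 0})
    (hiden : ∑ a : V, (Kl n (a : K n) ^ 2 - Kl n (a : K n))
        = 2^(n+k) - 2^(n+1) + 2^k * ∑ u : P, Kl n ((u : K n)⁻¹))
    (hweil : ∀ a : K n, (|Kl n a| : ℝ) ≤ 2 ^ ((n : ℝ)/2 + 1)) :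
    (k : ℝ) ≤ (n : ℝ)/2 + 1 := by
  classical
  have hfd : FiniteDimensional (ZMod 2) (K n) := inferInstance
  have hkn : Module.finrank (ZMod 2) (K n) = n := GaloisField.finrank 2 (by omega)
  have hknV : k ≤ n := by
    have h := Submodule.finrank_le V
    rw [hkn, hk] at h
    exact h
  -- the left side of the identity vanishes
  have hL : (∑ a : V, (Kl n (a : K n) ^ 2 - Kl n (a : K n))) = 0 :=
    Finset.sum_eq_zero fun a _ => by rw [hzero a a.2]; ring
  rw [hL] at hiden
  set S : ℤ := ∑ u : P, Kl n ((u : K n)⁻¹) with hS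
  -- identify P with the orthogonal complement of V under the trace form
  have hB := traceForm_nondegenerate (ZMod 2) (K n)
  have hBr : (Algebra.traceForm (ZMod 2) (K n)).IsRefl :=
    (Algebra.traceForm_isSymm (ZMod 2)).isRefl
  have hPV : P = (Algebra.traceForm (ZMod 2) (K n)).orthogonal V := by
    ext x
    have hx : x ∈ P ↔ ∀ v ∈ V, tr n (v * x) = 0 := by
      rw [← SetLike.mem_coe, hP]; exact Iff.rfl
    rw [hx, LinearMap.BilinForm.mem_orthogonal_iff]
    exact Iff.rfl
  have hfrP : Module.finrank (ZMod 2) P = n - k := by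
    rw [hPV, LinearMap.BilinForm.finrank_orthogonal hB, hkn, hk]
  have hcardP : Fintype.card P = 2 ^ (n - k) := by
    have h := Module.card_eq_pow_finrank (K := ZMod 2) (V := P)
    rwa [ZMod.card, hfrP] at h
  -- bound |S|
  have hSb : (|S| : ℝ) ≤ (2 : ℝ) ^ (n - k) * 2 ^ ((n : ℝ)/2 + 1) := by
    have h1 : (|S| : ℝ) ≤ ∑ u : P, (|Kl n ((u : K n)⁻¹)| : ℝ) := by
      have := Finset.abs_sum_le_sum_abs (fun u : P => Kl n ((u : K n)⁻¹)) Finset.univ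
      rw [← hS] at this
      exact_mod_cast this
    have h2 : ∑ u : P, (|Kl n ((u : K n)⁻¹)| : ℝ)
        ≤ (Fintype.card P : ℝ) * 2 ^ ((n : ℝ)/2 + 1) := by
      calc ∑ u : P, (|Kl n ((u : K n)⁻¹)| : ℝ)
          ≤ ∑ _u : P, (2 : ℝ) ^ ((n : ℝ)/2 + 1) :=
            Finset.sum_le_sum fun u _ => hweil _
        _ = (Fintype.card P : ℝ) * 2 ^ ((n : ℝ)/2 + 1) := by
            rw [Finset.sum_const, Finset.card_univ, nsmul_eq_mul]
    refine h1.trans (h2.trans_eq ?_)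
    rw [hcardP]; push_cast; ring
  have h2pos : (0 : ℝ) < 2 := by norm_num
  -- the key inequality
  have hkey : (2 : ℝ) ^ (n + k) ≤ 2 ^ (n + 1) + (2 : ℝ) ^ n * 2 ^ ((n : ℝ)/2 + 1) := by
    have hZ : (2 : ℤ) ^ (n + k) = 2 ^ (n + 1) - 2 ^ k * S := by linarith [hiden]
    have hR : (2 : ℝ) ^ (n + k) = 2 ^ (n + 1) - 2 ^ k * (S : ℝ) := by exact_mod_cast hZ
    have h3 : -((2:ℝ) ^ k * (S : ℝ)) ≤ 2 ^ k * |(S : ℝ)| := by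
      have he : -((2:ℝ) ^ k * (S : ℝ)) = 2 ^ k * (-(S : ℝ)) := by ring
      rw [he]
      exact mul_le_mul_of_nonneg_left (neg_le_abs _) (by positivity)
    have h4 : (2 : ℝ) ^ k * |(S : ℝ)| ≤ (2 : ℝ) ^ n * 2 ^ ((n : ℝ)/2 + 1) := by
      have he : (2 : ℝ) ^ k * ((2 : ℝ) ^ (n - k) * 2 ^ ((n : ℝ)/2 + 1))
          = (2 : ℝ) ^ n * 2 ^ ((n : ℝ)/2 + 1) := by
        rw [← mul_assoc, ← pow_add, Nat.add_sub_cancel' hknV]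
      rw [← he]
      have habs : |(S : ℝ)| = (|S| : ℝ) := by rfl
      rw [habs]
      exact mul_le_mul_of_nonneg_left hSb (by positivity)
    nlinarith [hR, h3, h4]
  -- divide by 2^n
  set a : ℝ := (2 : ℝ) ^ ((n : ℝ)) with ha
  set b : ℝ := (2 : ℝ) ^ ((k : ℝ)) with hb
  set c : ℝ := (2 : ℝ) ^ ((n : ℝ)/2 + 1) with hc
  have hapos : 0 < a := Real.rpow_pos_of_pos h2pos _
  have hbpos : 0 < b := Real.rpow_pos_of_pos h2pos _
  have hcpos : 0 < c := Real.rpow_pos_of_pos h2pos _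
  have e1 : (2 : ℝ) ^ (n + k) = a * b := by
    rw [ha, hb, ← Real.rpow_natCast 2 (n + k), Nat.cast_add, Real.rpow_add h2pos]
  have e2 : (2 : ℝ) ^ (n + 1) = a * 2 := by
    rw [ha, ← Real.rpow_natCast 2 (n + 1), Nat.cast_add, Nat.cast_one,
      Real.rpow_add h2pos, Real.rpow_one]
  have e3 : (2 : ℝ) ^ (n : ℕ) = a := (Real.rpow_natCast 2 n).symm
  rw [e1, e2, e3] at hkey
  have hkey2 : b ≤ 2 + c := by
    have h := hkey
    have : a * b ≤ a * (2 + c) := by nlinarith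
    exact le_of_mul_le_mul_left (by linarith [this]) hapos
  -- finish by contradiction
  by_contra hcon
  push_neg at hcon
  have hk32 : (n : ℝ)/2 + 3/2 ≤ (k : ℝ) := by
    have h23 : n + 3 ≤ 2 * k := by
      by_contra h
      push_neg at h
      have h2' : 2 * k ≤ n + 2 := by omega
      have h2r : (2 : ℝ) * k ≤ (n : ℝ) + 2 := by exact_mod_cast h2'
      linarith
    have : (n : ℝ) + 3 ≤ 2 * k := by exact_mod_cast h23
    linarith
  set s : ℝ := Real.sqrt 2 with hs
  have hs2 : s ^ 2 = 2 := Real.sq_sqrt (by norm_num)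
  have hs0 : 0 ≤ s := Real.sqrt_nonneg 2
  have hs14 : (1.41 : ℝ) ≤ s := by nlinarith
  have hs15 : s ≤ (1.42 : ℝ) := by nlinarith
  set t : ℝ := (2 : ℝ) ^ ((n : ℝ)/2) with ht
  have htpos : 0 < t := Real.rpow_pos_of_pos h2pos _
  have e4 : c = 2 * t := by
    rw [hc, ht, Real.rpow_add h2pos, Real.rpow_one]; ring
  have h32 : (2 : ℝ) ^ ((3 : ℝ)/2) = 2 * s := by
    rw [show (3 : ℝ)/2 = 1 + 1/2 by norm_num, Real.rpow_add h2pos, Real.rpow_one,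
      hs, Real.sqrt_eq_rpow]
  have e5 : (2 : ℝ) ^ ((n : ℝ)/2 + 3/2) = t * (2 * s) := by
    rw [ht, Real.rpow_add h2pos, h32]
  have ht2s : 2 * s ≤ t := by
    rw [← h32, ht]
    exact Real.rpow_le_rpow_left_iff (by norm_num : (1 : ℝ) < 2) |>.mpr
      (by have : (3 : ℝ) ≤ (n : ℝ) := by exact_mod_cast hn
          linarith)
  have hmono : (2 : ℝ) ^ ((n : ℝ)/2 + 3/2) ≤ b := by
    rw [hb]
    exact Real.rpow_le_rpow_left_iff (by norm_num : (1 : ℝ) < 2) |>.mpr hk32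
  rw [e5] at hmono
  rw [e4] at hkey2
  nlinarith [hmono, hkey2, ht2s, htpos, hs2, hs14, hs15]
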